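/- Let n ≥ 2 and a_1,…,a_m ∈ ℝ^n with m ≤ 2n − 2. Then the vectors fail the complement property: there exists a subset I ⊆ {1,…,m} such that neither {a_j : j ∈ I} nor {a_j : j ∈ I^c} spans ℝ^n. Consequently, the measurement map x ↦ (|⟨a_j,x⟩|²)_{j=1}^m is not injective on ℝ^n up to sign. -/

import Mathlib

open Matrix

lemma span_ne_top_of_card_lt {n : ℕ} (S : Set (Fin n → ℝ)) [Fintype S]
    (h : S.toFinset.card < n) : Submodule.span ℝ S ≠ ⊤ :=
  (span_lt_top_of_card_lt_finrank (R := ℝ) (s := S) (by simpa using h)).ne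

lemma single_sum {n : ℕ} (x : Fin n → ℝ) : ∑ i, x i • (Pi.single i 1 : Fin n → ℝ) = x := by
  ext j
  simp [Pi.single_apply]

lemma exists_orth {n : ℕ} (S : Set (Fin n → ℝ)) (h : Submodule.span ℝ S ≠ ⊤) :
    ∃ u : Fin n → ℝ, u ≠ 0 ∧ ∀ v ∈ S, v ⬝ᵥ u = 0 := by
  obtain ⟨f, hf0, hf⟩ := (Submodule.span ℝ S).exists_dual_map_eq_bot_of_lt_top
    (lt_top_iff_ne_top.mpr h) inferInstance
  have frep : ∀ x : Fin n → ℝ, f x = ∑ i, x i * f (Pi.single i 1) := by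
    intro x
    conv_lhs => rw [← single_sum x]
    rw [map_sum]
    simp
  refine ⟨fun i => f (Pi.single i 1), ?_, ?_⟩
  · intro hu
    apply hf0
    apply LinearMap.ext
    intro x
    rw [frep x]
    simp only [LinearMap.zero_apply]
    have : ∀ i, f (Pi.single i 1) = 0 := fun i => congrFun hu i
    simp [this]
  · intro v hv
    have hv' : v ∈ Submodule.span ℝ S := Submodule.subset_span hv
    have hfv : f v = 0 := by
      have := (Submodule.eq_bot_iff _).mp hf (f v) ⟨v, hv', rfl⟩
      simpa using this
    rw [dotProduct, ← frep v, hfv]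

/-- with `m ≤ 2n - 2` vectors in `ℝⁿ` (`n ≥ 2`), the complement property fails,
and consequently the measurement map `x ↦ (⟨aⱼ,x⟩²)ⱼ` is not injective up to sign. -/
theorem stmt12 (n m : ℕ) (hn : 2 ≤ n) (hm : m + 2 ≤ 2 * n) (a : Fin m → (Fin n → ℝ)) :
    (∃ I : Finset (Fin m),
      Submodule.span ℝ (a '' (I : Set (Fin m))) ≠ ⊤ ∧
      Submodule.span ℝ (a '' ((I : Set (Fin m))ᶜ)) ≠ ⊤) ∧
    ∃ x y : Fin n → ℝ, x ≠ y ∧ x ≠ -y ∧ ∀ j, (a j ⬝ᵥ x) ^ 2 = (a j ⬝ᵥ y) ^ 2 := by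
  classical
  set I : Finset (Fin m) := Finset.univ.filter (fun j => (j : ℕ) < n - 1) with hI
  have hcardI : I.card ≤ n - 1 := by
    have h := Finset.card_le_card_of_injOn (s := I) (t := Finset.range (n - 1))
      (fun j => (j : ℕ))
      (by intro j hj; have hj : j ∈ I := hj; simp only [hI, Finset.mem_filter] at hj; simpa using hj.2)
      (by intro x _ y _ h; exact Fin.ext h)
    simpa using h
  have hcardIc : Iᶜ.card ≤ n - 1 := by
    have h := Finset.card_le_card_of_injOn (s := Iᶜ) (t := Finset.range (m - (n - 1)))
      (fun j => (j : ℕ) - (n - 1))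
      (by intro j hj
          have hj : j ∈ Iᶜ := hj
          simp only [hI, Finset.mem_compl, Finset.mem_filter, Finset.mem_univ,
            true_and, not_lt] at hj
          show (j : ℕ) - (n - 1) ∈ Finset.range (m - (n - 1))
          simp only [Finset.mem_range]
          have := j.isLt
          omega)
      (by intro x hx y hy h
          simp only [hI, Finset.mem_coe, Finset.mem_compl, Finset.mem_filter,
            Finset.mem_univ, true_and, not_lt] at hx hy
          have h' : (x : ℕ) - (n - 1) = (y : ℕ) - (n - 1) := h
          exact Fin.ext (by omega))
    simp only [Finset.card_range] at h
    omega
  have hspan : ∀ (T : Finset (Fin m)), T.card ≤ n - 1 →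
      Submodule.span ℝ (a '' (T : Set (Fin m))) ≠ ⊤ := by
    intro T hT
    apply span_ne_top_of_card_lt
    have h1 : (a '' (T : Set (Fin m))).toFinset ⊆ T.image a := by
      intro x hx
      simp only [Set.mem_toFinset, Set.mem_image, Finset.mem_coe] at hx
      obtain ⟨j, hj, rfl⟩ := hx
      exact Finset.mem_image_of_mem a hj
    have h2 := Finset.card_le_card h1
    have h3 := Finset.card_image_le (s := T) (f := a)
    omega
  have hI1 : Submodule.span ℝ (a '' (I : Set (Fin m))) ≠ ⊤ := hspan I hcardI
  have hI2 : Submodule.span ℝ (a '' ((I : Set (Fin m))ᶜ)) ≠ ⊤ := by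
    have hc : ((I : Set (Fin m))ᶜ) = ((Iᶜ : Finset (Fin m)) : Set (Fin m)) := by simp
    rw [hc]; exact hspan Iᶜ hcardIc
  refine ⟨⟨I, hI1, hI2⟩, ?_⟩
  obtain ⟨v, hv0, hv⟩ := exists_orth _ hI1
  obtain ⟨u, hu0, hu⟩ := exists_orth _ hI2
  refine ⟨u + v, u - v, ?_, ?_, ?_⟩
  · intro h
    apply hv0
    ext i
    have := congrFun h i
    simp only [Pi.add_apply, Pi.sub_apply] at this
    simp only [Pi.zero_apply]
    linarith
  · intro h
    apply hu0
    ext i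
    have := congrFun h i
    simp only [Pi.add_apply, Pi.neg_apply, Pi.sub_apply] at this
    simp only [Pi.zero_apply]
    linarith
  · intro j
    by_cases hj : j ∈ I
    · have h1 : a j ⬝ᵥ v = 0 := hv (a j) ⟨j, by simpa using hj, rfl⟩
      rw [dotProduct_add, dotProduct_sub, h1]
      ring
    · have h1 : a j ⬝ᵥ u = 0 := hu (a j) ⟨j, by simpa using hj, rfl⟩
      rw [dotProduct_add, dotProduct_sub, h1]
      ring
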